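/- arXiv:2510.07416 — 5 statements merged into one kernel-verified Lean document; each statement's English description precedes it below -/
import Mathlib

section
/- Let s ≥ 3 be an integer and let p be a prime with (p-1) | (s-1). Then for every integer n with 3 ≤ n ≤ s, p divides f(n) := ∑_{k=0}^{n-1} (-1)^k · C(n,k) · (n-k)^s. -/
lemma aux_alt_sum (n : ℕ) (hn : 2 ≤ n) :
    ∑ k ∈ Finset.range n, (-1 : ℤ) ^ k * (n.choose k) * ((n : ℤ) - k) = 0 := by
  have h : ∀ k ∈ Finset.range n, (-1 : ℤ) ^ k * (n.choose k) * ((n : ℤ) - k)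
      = (n : ℤ) * ((-1) ^ k * ((n - 1).choose k)) := by
    intro k hk
    rw [Finset.mem_range] at hk
    have hnat : (n - 1).choose k * n = n.choose k * (n - k) := by
      have := Nat.choose_mul_succ_eq (n - 1) k
      rwa [Nat.sub_add_cancel (by omega)] at this
    have hcast : ((n - 1).choose k : ℤ) * n = (n.choose k : ℤ) * ((n : ℤ) - k) := by
      have := congrArg (fun x : ℕ => (x : ℤ)) hnat
      push_cast [Nat.cast_sub hk.le] at this
      exact this
    rw [mul_assoc, ← hcast]; ring
  rw [Finset.sum_congr rfl h, ← Finset.mul_sum]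
  have : ∑ k ∈ Finset.range n, (-1 : ℤ) ^ k * ((n - 1).choose k) = 0 := by
    have hn1 : n = (n - 1) + 1 := by omega
    rw [hn1]
    exact Int.alternating_sum_range_choose_of_ne (by omega)
  rw [this, mul_zero]

theorem prime_dvd_alternating_sum (s : ℕ) (hs : 3 ≤ s) (p : ℕ) (hp : p.Prime)
    (hdvd : (p - 1) ∣ (s - 1)) (n : ℕ) (hn3 : 3 ≤ n) (hns : n ≤ s) :
    (p : ℤ) ∣ ∑ k ∈ Finset.range n, (-1 : ℤ) ^ k * (n.choose k) * ((n : ℤ) - k) ^ s := by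
  haveI : Fact p.Prime := ⟨hp⟩
  have key : ∀ a : ZMod p, a ^ s = a := by
    intro a
    obtain ⟨m, hm⟩ := hdvd
    have hs1 : s = (p - 1) * m + 1 := by
      have := hp.two_le; omega
    by_cases ha : a = 0
    · subst ha; exact zero_pow (by omega)
    · rw [hs1, pow_succ, pow_mul, ZMod.pow_card_sub_one_eq_one ha, one_pow, one_mul]
  rw [← ZMod.intCast_zmod_eq_zero_iff_dvd]
  push_cast
  have : ∀ k ∈ Finset.range n, (-1 : ZMod p) ^ k * (n.choose k) * ((n : ZMod p) - k) ^ s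
      = (-1 : ZMod p) ^ k * (n.choose k) * ((n : ZMod p) - k) := by
    intro k _; rw [key]
  rw [Finset.sum_congr rfl this]
  have hz := aux_alt_sum n (by omega)
  have := congrArg (fun x : ℤ => (x : ZMod p)) hz
  push_cast at this
  exact this
end

section
/- Let p be an odd prime and s ≥ 3 an integer with (p-1) | (s-1), and suppose that i^{s-1} ≡ 1 (mod p²) for all integers 1 ≤ i ≤ p-1. Then f(p) := ∑_{k=0}^{p-1} (-1)^k · C(p,k) · (p-k)^s ≡ -p (mod p²). -/
theorem fp_congr_neg_p_mod_p_sq (p : ℕ) (hp : p.Prime) (hpodd : Odd p)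
    (s : ℕ) (hs : 3 ≤ s) (hdvd : (p - 1) ∣ (s - 1))
    (h : ∀ i : ℕ, 1 ≤ i → i ≤ p - 1 → (i : ℤ) ^ (s - 1) ≡ 1 [ZMOD (p ^ 2)]) :
    (∑ k ∈ Finset.range p, (-1 : ℤ) ^ k * (p.choose k) * ((p : ℤ) - k) ^ s)
      ≡ -(p : ℤ) [ZMOD (p ^ 2)] := by
  have hp2 : 2 ≤ p := hp.two_le
  -- termwise congruence
  have key : ∀ k ∈ Finset.range p,
      (-1 : ℤ) ^ k * (p.choose k) * ((p : ℤ) - k) ^ s ≡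
      (-1 : ℤ) ^ k * (p.choose k) * (if k = 0 then 0 else ((p : ℤ) - k)) [ZMOD (p ^ 2)] := by
    intro k hk
    rw [Finset.mem_range] at hk
    rcases Nat.eq_zero_or_pos k with hk0 | hk1
    · subst hk0
      simp only [if_pos rfl, pow_zero, one_mul, Nat.choose_zero_right, Nat.cast_one, mul_zero]
      have : ((p : ℤ)^2) ∣ (p : ℤ) ^ s := pow_dvd_pow _ (by omega)
      have : ((p^2 : ℕ) : ℤ) ∣ (p : ℤ) ^ s - 0 := by push_cast; simpa using this
      exact (Int.modEq_iff_dvd.mpr (by simpa using this.neg_right)).symm.trans (by simp) |>.symm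
    · rw [if_neg (by omega)]
      refine Int.ModEq.mul_left _ ?_
      have hpk : (p : ℤ) - k = ((p - k : ℕ) : ℤ) := by push_cast [Nat.cast_sub hk.le]; ring
      rw [hpk]
      have h1 : ((p - k : ℕ) : ℤ) ^ (s - 1) ≡ 1 [ZMOD (p ^ 2)] := h (p - k) (by omega) (by omega)
      calc ((p - k : ℕ) : ℤ) ^ s = ((p - k : ℕ) : ℤ) ^ (s - 1) * ((p - k : ℕ) : ℤ) := by
            rw [← pow_succ]; congr 1; omega
        _ ≡ 1 * ((p - k : ℕ) : ℤ) [ZMOD (p ^ 2)] := h1.mul_right _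
        _ = ((p - k : ℕ) : ℤ) := one_mul _
  have step : (∑ k ∈ Finset.range p, (-1 : ℤ) ^ k * (p.choose k) * ((p : ℤ) - k) ^ s) ≡
      (∑ k ∈ Finset.range p,
        (-1 : ℤ) ^ k * (p.choose k) * (if k = 0 then 0 else ((p : ℤ) - k))) [ZMOD (p ^ 2)] := by
    refine Int.modEq_iff_dvd.mpr ?_
    rw [← Finset.sum_sub_distrib]
    exact Finset.dvd_sum fun k hk => (key k hk).dvd
  refine step.trans ?_
  -- evaluate the simplified sum
  have hid : ∀ k : ℕ, k < p → (p.choose k) * (p - k) = p * ((p-1).choose k) := by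
    intro k hk
    have h1 := Nat.choose_succ_right_eq p k
    have h2 := Nat.add_one_mul_choose_eq (p - 1) k
    rw [Nat.sub_add_cancel (by omega)] at h2
    rw [← Nat.choose_succ_right_eq, ← h2]
  have hsum : (∑ k ∈ Finset.range p,
      (-1 : ℤ) ^ k * (p.choose k) * (if k = 0 then 0 else ((p : ℤ) - k))) = -(p : ℤ) := by
    have hsplit : ∀ k ∈ Finset.range p,
        (-1 : ℤ) ^ k * (p.choose k) * (if k = 0 then 0 else ((p : ℤ) - k)) =
        (-1 : ℤ) ^ k * (p.choose k) * ((p : ℤ) - k) - (if k = 0 then (p : ℤ) else 0) := by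
      intro k hk
      rcases Nat.eq_zero_or_pos k with hk0 | hk1
      · subst hk0; simp
      · rw [if_neg (by omega), if_neg (by omega)]; ring
    rw [Finset.sum_congr rfl hsplit, Finset.sum_sub_distrib]
    have h0 : (∑ k ∈ Finset.range p, (if k = 0 then (p : ℤ) else 0)) = (p : ℤ) := by
      rw [Finset.sum_ite_eq' (Finset.range p) 0 (fun _ => (p : ℤ))]
      simp [Finset.mem_range, (by omega : 0 < p)]
    have hmain : (∑ k ∈ Finset.range p, (-1 : ℤ) ^ k * (p.choose k) * ((p : ℤ) - k)) = 0 := by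
      have hcongr : ∀ k ∈ Finset.range p,
          (-1 : ℤ) ^ k * (p.choose k) * ((p : ℤ) - k) =
          (p : ℤ) * ((-1 : ℤ) ^ k * ((p-1).choose k)) := by
        intro k hk
        rw [Finset.mem_range] at hk
        have := hid k hk
        have hpk : (p : ℤ) - k = ((p - k : ℕ) : ℤ) := by push_cast [Nat.cast_sub hk.le]; ring
        calc (-1 : ℤ) ^ k * (p.choose k) * ((p : ℤ) - k)
            = ((p.choose k * (p - k) : ℕ) : ℤ) * (-1 : ℤ) ^ k := by rw [hpk]; push_cast; ring
          _ = (p : ℤ) * ((-1 : ℤ) ^ k * ((p-1).choose k)) := by rw [this]; push_cast; ring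
      rw [Finset.sum_congr rfl hcongr, ← Finset.mul_sum]
      have : (∑ k ∈ Finset.range p, (-1 : ℤ) ^ k * ((p-1).choose k)) = 0 := by
        have hp1 : p = (p - 1) + 1 := by omega
        rw [hp1]
        exact Int.alternating_sum_range_choose_of_ne (by omega)
      rw [this, mul_zero]
    rw [hmain, h0]; ring
  rw [hsum]
end

section
/- Let s ≥ 3 be odd, and let p be an odd prime such that p divides f(n) := ∑_{k=0}^{n-1} (-1)^k C(n,k)(n-k)^s for all 3 ≤ n ≤ s (assuming p ≤ s so the range is nonempty; in particular p | f(3) and p | f(4)). Then p divides (2^s - 2)(2^s - 4). -/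
theorem odd_prime_dvd_two_pow_product (s : ℕ) (hs : 3 ≤ s) (hsodd : Odd s)
    (p : ℕ) (hp : p.Prime) (hpodd : Odd p) (hps : p ≤ s)
    (hf : ∀ n : ℕ, 3 ≤ n → n ≤ s →
      (p : ℤ) ∣ ∑ k ∈ Finset.range n, (-1 : ℤ) ^ k * (n.choose k) * ((n : ℤ) - k) ^ s)
    (hf3 : (p : ℤ) ∣ ∑ k ∈ Finset.range 3, (-1 : ℤ) ^ k * ((3 : ℕ).choose k) * ((3 : ℤ) - k) ^ s)
    (hf4 : (p : ℤ) ∣ ∑ k ∈ Finset.range 4, (-1 : ℤ) ^ k * ((4 : ℕ).choose k) * ((4 : ℤ) - k) ^ s) :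
    (p : ℤ) ∣ ((2 : ℤ) ^ s - 2) * ((2 : ℤ) ^ s - 4) := by
  have h3 : (p : ℤ) ∣ (3 : ℤ) ^ s - 3 * 2 ^ s + 3 := by
    simpa [Finset.sum_range_succ, Nat.choose, ← sub_eq_add_neg] using hf3
  have h4 : (p : ℤ) ∣ (4 : ℤ) ^ s - 4 * 3 ^ s + 6 * 2 ^ s - 4 := by
    simpa [Finset.sum_range_succ, Nat.choose, ← sub_eq_add_neg] using hf4
  have key : ((2 : ℤ) ^ s - 2) * ((2 : ℤ) ^ s - 4) =
      ((4 : ℤ) ^ s - 4 * 3 ^ s + 6 * 2 ^ s - 4) + 4 * ((3 : ℤ) ^ s - 3 * 2 ^ s + 3) := by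
    have : (4 : ℤ) ^ s = (2 ^ s) * (2 ^ s) := by
      rw [show (4 : ℤ) = 2 * 2 by norm_num, mul_pow]
    rw [this]; ring
  rw [key]
  exact dvd_add h4 (Dvd.dvd.mul_left h3 4)
end

section
/- Let s ≥ 3 be odd. The greatest common divisor of the numbers f(n) = ∑_{k=0}^{n-1} (-1)^k · C(n,k) · (n-k)^s, taken over all integers n with 3 ≤ n ≤ s, equals the product ∏_{p ∈ P_s} p, where P_s = { p prime : p ≤ s and (p-1) | (s-1) }. -/
open Finset

private def Fa (n r : ℕ) : ℤ := ∑ j ∈ range (n+1), (-1)^(n-j) * (n.choose j) * (j:ℤ)^r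



private lemma neg_one_pow_sub {n j : ℕ} (h : j ≤ n) :
    ((-1 : ℤ))^(n-j) = (-1)^n * (-1)^j := by
  have h1 : ((-1:ℤ))^(n-j) * (-1)^j = (-1)^n := by
    rw [← pow_add, Nat.sub_add_cancel h]
  have h2 : ((-1:ℤ))^j * (-1)^j = 1 := by
    rw [← pow_add, ← two_mul, pow_mul]; norm_num
  calc ((-1:ℤ))^(n-j) = (-1)^(n-j) * ((-1)^j * (-1)^j) := by rw [h2, mul_one]
    _ = ((-1:ℤ))^(n-j) * (-1)^j * (-1)^j := by ring
    _ = (-1)^n * (-1)^j := by rw [h1]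

private lemma f_eq_Fa (n s : ℕ) (hs : 1 ≤ s) :
    (∑ k ∈ range n, (-1 : ℤ) ^ k * (n.choose k) * ((n : ℤ) - k) ^ s) = Fa n s := by
  rw [Fa, Finset.sum_range_succ']
  have h0 : ((-1:ℤ))^(n-0) * (n.choose 0) * ((0:ℕ):ℤ)^s = 0 := by
    simp [zero_pow (by omega : s ≠ 0)]
  rw [h0, add_zero, ← Finset.sum_range_reflect]
  apply Finset.sum_congr rfl
  intro i hi
  rw [Finset.mem_range] at hi
  have h1 : n - 1 - i = n - (i+1) := by omega
  have hc : n.choose (n - (i+1)) = n.choose (i+1) :=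
    Nat.choose_symm (by omega : i + 1 ≤ n)
  have hv : ((n : ℤ) - ((n - (i+1) : ℕ) : ℤ)) = ((i+1 : ℕ) : ℤ) := by
    have : ((n - (i+1) : ℕ) : ℤ) = (n : ℤ) - ((i+1 : ℕ) : ℤ) := by
      exact_mod_cast Int.ofNat_sub (by omega)
    rw [this]; push_cast; ring
  rw [h1, hc, hv]

private lemma Fa_rec (m q : ℕ) :
    Fa (m+1) (q+1) = (m+1) * ∑ t ∈ range (q+1), ((q.choose t : ℤ)) * Fa m t := by
  rw [Fa, Finset.sum_range_succ']
  have h0 : ((-1:ℤ))^(m+1-0) * ((m+1).choose 0) * ((0:ℕ):ℤ)^(q+1) = 0 := by simp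
  rw [h0, add_zero]
  have hterm : ∀ i ∈ range (m+1),
      ((-1:ℤ))^(m+1-(i+1)) * ((m+1).choose (i+1)) * ((i+1 : ℕ):ℤ)^(q+1)
        = (m+1) * ∑ t ∈ range (q+1), (q.choose t : ℤ) * ((-1)^(m-i) * (m.choose i) * (i:ℤ)^t) := by
    intro i hi
    rw [Finset.mem_range] at hi
    have hc : ((m+1).choose (i+1)) * (i+1) = (m+1) * m.choose i := by
      rw [← Nat.add_one_mul_choose_eq]
    have hpow : ((i:ℤ)+1)^q = ∑ t ∈ range (q+1), (i:ℤ)^t * (q.choose t : ℤ) := by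
      have := add_pow (i:ℤ) 1 q
      simpa using this
    have h1 : m+1-(i+1) = m - i := by omega
    push_cast
    calc ((-1:ℤ))^(m-i) * ((m+1).choose (i+1) : ℤ) * ((i:ℤ)+1)^(q+1)
        = ((-1:ℤ))^(m-i) * ((((m+1).choose (i+1) : ℤ)) * ((i:ℤ)+1)) * ((i:ℤ)+1)^q := by ring
      _ = ((-1:ℤ))^(m-i) * ((m+1) * (m.choose i : ℤ)) * ((i:ℤ)+1)^q := by
          congr 2; exact_mod_cast congrArg (Nat.cast : ℕ → ℤ) hc
      _ = (m+1) * (((-1:ℤ))^(m-i) * (m.choose i : ℤ) * ((i:ℤ)+1)^q) := by ring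
      _ = _ := by
          rw [hpow, Finset.mul_sum]
          congr 1
          apply Finset.sum_congr rfl
          intro t _
          ring
  rw [Finset.sum_congr rfl hterm, ← Finset.mul_sum]
  congr 1
  rw [Finset.sum_comm]
  apply Finset.sum_congr rfl
  intro t _
  rw [Fa, Finset.mul_sum]

private lemma Fa_eq_zero : ∀ n : ℕ, ∀ r < n, Fa n r = 0 := by
  intro n
  induction n with
  | zero => intro r hr; omega
  | succ m ih =>
    intro r hr
    match r with
    | 0 =>
      have : Fa (m+1) 0 = (-1:ℤ)^(m+1) * ∑ j ∈ range (m+2), (-1:ℤ)^j * ((m+1).choose j) := by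
        rw [Fa, Finset.mul_sum]
        apply Finset.sum_congr rfl
        intro j hj
        rw [Finset.mem_range] at hj
        have h1 : ((-1:ℤ))^(m+1-j) = (-1)^(m+1) * (-1)^j := by
          have h : ((-1:ℤ))^(m+1-j) * (-1)^j = (-1)^(m+1) := by
            rw [← pow_add, Nat.sub_add_cancel (by omega)]
          have h2 : ((-1:ℤ))^j * (-1)^j = 1 := by
            rw [← pow_add, ← two_mul, pow_mul]; norm_num
          calc ((-1:ℤ))^(m+1-j) = (-1)^(m+1-j) * ((-1)^j * (-1)^j) := by rw [h2, mul_one]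
            _ = ((-1:ℤ))^(m+1-j) * (-1)^j * (-1)^j := by ring
            _ = (-1)^(m+1) * (-1)^j := by rw [h]
        rw [h1]; ring
      rw [this, Int.alternating_sum_range_choose_of_ne (by omega : m + 1 ≠ 0), mul_zero]
    | q+1 =>
      rw [Fa_rec]
      have : ∑ t ∈ range (q+1), ((q.choose t : ℤ)) * Fa m t = 0 := by
        apply Finset.sum_eq_zero
        intro t ht
        rw [Finset.mem_range] at ht
        rw [ih t (by omega), mul_zero]
      rw [this, mul_zero]

private lemma Fa_self (n : ℕ) : Fa n n = (n.factorial : ℤ) := by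
  induction n with
  | zero => simp [Fa]
  | succ m ih =>
    rw [Fa_rec, Finset.sum_range_succ]
    have hz : ∑ t ∈ range m, ((m.choose t : ℤ)) * Fa m t = 0 := by
      apply Finset.sum_eq_zero
      intro t ht
      rw [Finset.mem_range] at ht
      rw [Fa_eq_zero m t ht, mul_zero]
    rw [hz, zero_add, ih, Nat.choose_self, Nat.factorial_succ]
    push_cast; ring

private lemma Fa_cast (q n r : ℕ) :
    ((Fa n r : ℤ) : ZMod q) = ∑ j ∈ range (n+1), (-1)^(n-j) * ((n.choose j : ℕ) : ZMod q) * ((j:ℕ) : ZMod q)^r := by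
  rw [Fa]
  push_cast
  rfl

private lemma pow_congr_zmod (q : ℕ) [Fact q.Prime] {a b : ℕ} (ha : 1 ≤ a) (hab : a ≤ b)
    (h : (q-1) ∣ (b - a)) (x : ZMod q) : x^b = x^a := by
  obtain ⟨t, ht⟩ := h
  have hb : b = a + (q-1)*t := by omega
  by_cases hx : x = 0
  · subst hx
    rw [zero_pow (by omega : b ≠ 0), zero_pow (by omega : a ≠ 0)]
  · rw [hb, pow_add, pow_mul, ZMod.pow_card_sub_one_eq_one hx, one_pow, mul_one]

private lemma Fa_congr (q n r s : ℕ) [Fact q.Prime] (hr : 1 ≤ r) (hrs : r ≤ s)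
    (h : (q-1) ∣ (s - r)) : ((Fa n s : ℤ) : ZMod q) = ((Fa n r : ℤ) : ZMod q) := by
  rw [Fa_cast, Fa_cast]
  apply Finset.sum_congr rfl
  intro j _
  rw [pow_congr_zmod q hr hrs h]

private lemma prime_dvd_f (p n s : ℕ) [Fact p.Prime] (hps : (p-1) ∣ (s-1)) (hs : 1 ≤ s)
    (hn : 2 ≤ n) : (p : ℤ) ∣ Fa n s := by
  rw [← ZMod.intCast_zmod_eq_zero_iff_dvd]
  rw [Fa_congr p n 1 s (by omega) hs hps]
  rw [Fa_eq_zero n 1 (by omega)]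
  exact Int.cast_zero

private lemma choose_congr (p : ℕ) [hp : Fact p.Prime] :
    ∀ j, j ≤ p - 1 → (((p-1).choose j : ℕ) : ZMod p) = (-1)^j := by
  intro j
  induction j with
  | zero => intro _; simp
  | succ i ih =>
    intro hj
    have hp1 : 1 ≤ p := hp.out.one_lt.le
    have hpascal : (p-1).choose i + (p-1).choose (i+1) = p.choose (i+1) := by
      have h := Nat.choose_succ_succ (p-1) i
      rw [show (p-1).succ = p by omega] at h
      simp only [Nat.succ_eq_add_one] at h
      omega
    have hdvd : p ∣ p.choose (i+1) :=
      Nat.Prime.dvd_choose_self hp.out (by omega) (by omega)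
    have hcast : (((p-1).choose i : ℕ) : ZMod p) + (((p-1).choose (i+1) : ℕ) : ZMod p) = 0 := by
      have : ((p.choose (i+1) : ℕ) : ZMod p) = 0 := (ZMod.natCast_eq_zero_iff _ _).mpr hdvd
      rw [← this, ← hpascal]; push_cast; ring
    have := ih (by omega)
    rw [this] at hcast
    have : (((p-1).choose (i+1) : ℕ) : ZMod p) = -(-1:ZMod p)^i := by linear_combination hcast
    rw [this, pow_succ]
    ring

private lemma neg_one_pow_sub' {R : Type*} [Ring R] {n j : ℕ} (h : j ≤ n) :
    ((-1 : R))^(n-j) = (-1)^n * (-1)^j := by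
  have h1 : ((-1:R))^(n-j) * (-1)^j = (-1)^n := by
    rw [← pow_add, Nat.sub_add_cancel h]
  have h2 : ((-1:R))^j * (-1)^j = 1 := by
    rw [← pow_add, ← two_mul, pow_mul]; norm_num
  calc ((-1:R))^(n-j) = (-1)^(n-j) * ((-1)^j * (-1)^j) := by rw [h2, mul_one]
    _ = ((-1:R))^(n-j) * (-1)^j * (-1)^j := by rw [mul_assoc]
    _ = (-1)^n * (-1)^j := by rw [h1]

private lemma Fa_prime_eq (p s : ℕ) (hp : 1 ≤ p) (hs : 2 ≤ s) :
    Fa p s = p * ∑ j ∈ range (p+1), (-1)^(p-j) * ((p-1).choose (j-1) : ℤ) * (j:ℤ)^(s-1) := by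
  rw [Fa, Finset.mul_sum]
  apply Finset.sum_congr rfl
  intro j hj
  rw [Finset.mem_range] at hj
  match j with
  | 0 => simp [zero_pow (show s ≠ 0 by omega), zero_pow (show s - 1 ≠ 0 by omega)]
  | i+1 =>
    have hc : p * (p-1).choose i = p.choose (i+1) * (i+1) := by
      have h := Nat.add_one_mul_choose_eq (p-1) i
      rw [show p - 1 + 1 = p by omega] at h
      simpa using h
    have hcZ : (p:ℤ) * ((p-1).choose i : ℤ) = (p.choose (i+1) : ℤ) * ((i:ℤ)+1) := by
      exact_mod_cast hc
    have hpow : ((i:ℤ)+1)^s = ((i:ℤ)+1)^(s-1) * ((i:ℤ)+1) := by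
      rw [← pow_succ, show s - 1 + 1 = s by omega]
    simp only [Nat.add_sub_cancel]
    push_cast
    rw [hpow]
    linear_combination (-((-1:ℤ))^(p-(i+1))) * ((i:ℤ)+1)^(s-1) * hcZ

private lemma G_eq (p s : ℕ) [hp : Fact p.Prime] (hodd : p ≠ 2) (hps : (p-1) ∣ (s-1))
    (hs : 3 ≤ s) :
    ((∑ j ∈ range (p+1), (-1)^(p-j) * ((p-1).choose (j-1) : ℤ) * (j:ℤ)^(s-1) : ℤ) : ZMod p)
      = -1 := by
  have hp2 : 2 ≤ p := hp.out.two_le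
  have hp3 : 3 ≤ p := by
    rcases Nat.lt_or_ge p 3 with h | h
    · interval_cases p <;> simp_all
    · exact h
  have hpodd : Odd p := hp.out.odd_of_ne_two hodd
  have hevenp1 : Even (p - 1) := by
    obtain ⟨k, hk⟩ := hpodd
    exact ⟨k, by omega⟩
  push_cast
  rw [Finset.sum_range_succ']
  have h0 : ((-1 : ZMod p))^(p-0) * (((p-1).choose (0-1) : ℕ) : ZMod p) * ((0:ℕ) : ZMod p)^(s-1) = 0 := by
    simp [zero_pow (show s - 1 ≠ 0 by omega)]
  rw [h0, add_zero]
  have hterm : ∀ i ∈ range p,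
      ((-1 : ZMod p))^(p-(i+1)) * (((p-1).choose ((i+1)-1) : ℕ) : ZMod p) * (((i+1:ℕ)) : ZMod p)^(s-1)
        = (((i+1:ℕ)) : ZMod p)^(s-1) := by
    intro i hi
    rw [Finset.mem_range] at hi
    simp only [Nat.add_sub_cancel]
    rw [choose_congr p i (by omega)]
    have hexp : p - (i+1) = (p-1) - i := by omega
    rw [hexp, neg_one_pow_sub' (by omega : i ≤ p - 1)]
    rw [Even.neg_one_pow hevenp1]
    have : ((-1 : ZMod p))^i * (-1)^i = 1 := by
      rw [← pow_add, ← two_mul, pow_mul]; norm_num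
    calc 1 * (-1:ZMod p)^i * (-1)^i * (((i+1:ℕ)) : ZMod p)^(s-1)
        = ((-1 : ZMod p)^i * (-1)^i) * (((i+1:ℕ)) : ZMod p)^(s-1) := by ring
      _ = _ := by rw [this, one_mul]
  rw [Finset.sum_congr rfl hterm]
  have hsplit := Finset.sum_range_succ (fun i => (((i+1:ℕ)) : ZMod p)^(s-1)) (p-1)
  rw [show p - 1 + 1 = p by omega] at hsplit
  rw [hsplit]
  have hlast : (((p:ℕ)) : ZMod p)^(s-1) = 0 := by
    rw [ZMod.natCast_self, zero_pow (show s - 1 ≠ 0 by omega)]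
  have hones : ∀ i ∈ range (p-1), (((i+1:ℕ)) : ZMod p)^(s-1) = 1 := by
    intro i hi
    rw [Finset.mem_range] at hi
    have hne : (((i+1:ℕ)) : ZMod p) ≠ 0 := by
      rw [Ne, ZMod.natCast_eq_zero_iff]
      intro hdvd
      have := Nat.le_of_dvd (by omega) hdvd
      omega
    obtain ⟨t, ht⟩ := hps
    rw [ht, pow_mul, ZMod.pow_card_sub_one_eq_one hne, one_pow]
  rw [Finset.sum_congr rfl hones, hlast, add_zero, Finset.sum_const, Finset.card_range,
    nsmul_eq_mul, mul_one]
  have : ((p - 1 : ℕ) : ZMod p) = ((p:ℕ) : ZMod p) - 1 := by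
    have := Nat.cast_sub (show 1 ≤ p by omega) (R := ZMod p)
    simpa using this
  rw [this, ZMod.natCast_self, zero_sub]

private lemma sq_not_dvd_odd (p s : ℕ) [hp : Fact p.Prime] (hodd : p ≠ 2)
    (hps : (p-1) ∣ (s-1)) (hs : 3 ≤ s) : ¬ ((p:ℤ)^2 ∣ Fa p s) := by
  intro hdvd
  rw [Fa_prime_eq p s hp.out.one_lt.le (by omega), sq] at hdvd
  have hpne : (p:ℤ) ≠ 0 := by exact_mod_cast hp.out.ne_zero
  have hG : (p:ℤ) ∣ _ := (mul_dvd_mul_iff_left hpne).mp hdvd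
  have := (ZMod.intCast_zmod_eq_zero_iff_dvd _ p).mpr hG
  rw [G_eq p s hodd hps hs] at this
  have h1 : (1 : ZMod p) ≠ 0 := one_ne_zero
  rw [neg_eq_zero] at this
  exact h1 this

private lemma sq_not_dvd_two (s : ℕ) (hs : 3 ≤ s) (hodd : Odd s) :
    ¬ ((2:ℤ)^2 ∣ Fa 3 s) := by
  intro h
  have hval : Fa 3 s = 3 - 3*2^s + 3^s := by
    rw [Fa]
    rw [Finset.sum_range_succ, Finset.sum_range_succ, Finset.sum_range_succ,
      Finset.sum_range_succ, Finset.sum_range_zero]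
    norm_num [zero_pow (show s ≠ 0 by omega)]
    ring
  have hcast := (ZMod.intCast_zmod_eq_zero_iff_dvd (Fa 3 s) 4).mpr (by exact_mod_cast h)
  rw [hval] at hcast
  push_cast at hcast
  have h2 : (2 : ZMod 4)^s = 0 := by
    have : (2 : ZMod 4)^s = (2:ZMod 4)^2 * 2^(s-2) := by
      rw [← pow_add, show 2 + (s-2) = s by omega]
    rw [this, show (2:ZMod 4)^2 = 0 by decide, zero_mul]
  have h3 : (3 : ZMod 4)^s = 3 := by
    rw [show (3 : ZMod 4) = -1 by decide, hodd.neg_one_pow]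
  rw [h2, h3] at hcast
  exact absurd hcast (by norm_num; decide)

private lemma exists_not_dvd (q s : ℕ) [hq : Fact q.Prime] (hqs : q ≤ s)
    (hnd : ¬ (q-1) ∣ (s-1)) (hsodd : Odd s) (hs : 3 ≤ s) :
    ∃ n, 3 ≤ n ∧ n ≤ s ∧ ¬ (q:ℤ) ∣ Fa n s := by
  have hq2 : q ≠ 2 := by rintro rfl; exact hnd (one_dvd _)
  have hq2' : 2 ≤ q := hq.out.two_le
  have hq3 : 3 ≤ q := by
    rcases Nat.lt_or_ge q 3 with h | h
    · interval_cases q <;> simp_all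
    · exact h
  have hqodd : Odd q := hq.out.odd_of_ne_two hq2
  set m := (s-1) % (q-1) with hm
  have hmlt : m < q - 1 := Nat.mod_lt _ (by omega)
  have hmne : m ≠ 0 := fun h => hnd (Nat.dvd_of_mod_eq_zero h)
  have hdm := Nat.div_add_mod (s-1) (q-1)
  have hevens : Even (s-1) := by
    obtain ⟨k, hk⟩ := hsodd; exact ⟨k, by omega⟩
  have hevenq : Even (q-1) := by
    obtain ⟨k, hk⟩ := hqodd; exact ⟨k, by omega⟩
  have hevenc : Even ((q-1) * ((s-1)/(q-1))) := hevenq.mul_right _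
  have hevenm : Even m := by
    rw [Nat.even_iff] at hevens hevenc ⊢
    omega
  set r := m + 1 with hr
  have hr3 : 3 ≤ r := by
    rw [Nat.even_iff] at hevenm; omega
  have hrs : r ≤ s := by omega
  have hdvd : (q-1) ∣ (s - r) := ⟨(s-1)/(q-1), by omega⟩
  refine ⟨r, hr3, hrs, ?_⟩
  intro hdvd'
  have hcast := (ZMod.intCast_zmod_eq_zero_iff_dvd (Fa r s) q).mpr hdvd'
  rw [Fa_congr q r r s (by omega) hrs hdvd, Fa_self] at hcast
  have : ((r.factorial : ℕ) : ZMod q) = 0 := by exact_mod_cast hcast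
  rw [ZMod.natCast_eq_zero_iff] at this
  rw [Nat.Prime.dvd_factorial hq.out] at this
  omega

theorem gcd_alternating_sums_eq_prod_primes (s : ℕ) (hs : 3 ≤ s) (hsodd : Odd s) :
    (Finset.Icc 3 s).gcd
        (fun n => ∑ k ∈ Finset.range n, (-1 : ℤ) ^ k * (n.choose k) * ((n : ℤ) - k) ^ s) =
      ∏ p ∈ (Finset.range (s + 1)).filter (fun p => p.Prime ∧ (p - 1) ∣ (s - 1)), (p : ℤ) := by
  classical
  set f : ℕ → ℤ := fun n => ∑ k ∈ Finset.range n, (-1 : ℤ) ^ k * (n.choose k) * ((n : ℤ) - k) ^ s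
    with hf
  have hfF : ∀ n, f n = Fa n s := fun n => f_eq_Fa n s (by omega)
  set P := (Finset.range (s + 1)).filter (fun p => p.Prime ∧ (p - 1) ∣ (s - 1)) with hP
  set g : ℤ := (Finset.Icc 3 s).gcd f with hg
  -- every prime in P divides g
  have hPdvd : ∀ p ∈ P, (p:ℤ) ∣ g := by
    intro p hp
    rw [hP, Finset.mem_filter, Finset.mem_range] at hp
    obtain ⟨hps, hpp, hpd⟩ := hp
    haveI : Fact p.Prime := ⟨hpp⟩
    apply Finset.dvd_gcd
    intro n hn
    rw [Finset.mem_Icc] at hn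
    rw [hfF]
    exact prime_dvd_f p n s hpd (by omega) (by omega)
  -- g divides f s = s!
  have hgs : g ∣ (s.factorial : ℤ) := by
    have := Finset.gcd_dvd (Finset.mem_Icc.mpr ⟨hs, le_refl s⟩) (f := f)
    rwa [hfF, Fa_self] at this
  have hgne : g ≠ 0 := by
    intro h0
    rw [h0] at hgs
    have := zero_dvd_iff.mp hgs
    exact_mod_cast Nat.factorial_ne_zero s (by exact_mod_cast this)
  -- any prime dividing g is in P
  have hprime_mem : ∀ q : ℕ, q.Prime → (q:ℤ) ∣ g → q ∈ P := by
    intro q hqp hqg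
    haveI : Fact q.Prime := ⟨hqp⟩
    have hqs : q ≤ s := by
      have : (q:ℤ) ∣ (s.factorial : ℤ) := hqg.trans hgs
      have : q ∣ s.factorial := by exact_mod_cast this
      exact (Nat.Prime.dvd_factorial hqp).mp this
    by_contra hqP
    rw [hP, Finset.mem_filter, Finset.mem_range] at hqP
    push_neg at hqP
    have hnd : ¬ (q-1) ∣ (s-1) := hqP (by omega) hqp
    obtain ⟨n, hn3, hns, hnd'⟩ := exists_not_dvd q s hqs hnd hsodd hs
    exact hnd' ((hqg.trans (Finset.gcd_dvd (Finset.mem_Icc.mpr ⟨hn3, hns⟩))).trans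
      (by rw [hfF]))
  -- no prime square divides g
  have hsq : ∀ p ∈ P, ¬ ((p:ℤ)^2 ∣ g) := by
    intro p hp hsq
    rw [hP, Finset.mem_filter, Finset.mem_range] at hp
    obtain ⟨hps, hpp, hpd⟩ := hp
    haveI : Fact p.Prime := ⟨hpp⟩
    by_cases hp2 : p = 2
    · subst hp2
      have h3 : (3:ℕ) ∈ Finset.Icc 3 s := Finset.mem_Icc.mpr ⟨le_refl 3, hs⟩
      have := (hsq.trans (Finset.gcd_dvd h3 (f := f)))
      rw [hfF] at this
      exact sq_not_dvd_two s hs hsodd (by exact_mod_cast this)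
    · have hpmem : p ∈ Finset.Icc 3 s := by
        have h2 := hpp.two_le
        exact Finset.mem_Icc.mpr ⟨by omega, by omega⟩
      have := (hsq.trans (Finset.gcd_dvd hpmem (f := f)))
      rw [hfF] at this
      exact sq_not_dvd_odd p s hp2 hpd hs this
  -- assemble
  set N : ℕ := ∏ p ∈ P, p with hN
  have hcastN : ((N : ℕ) : ℤ) = ∏ p ∈ P, (p:ℤ) := by
    rw [hN]; push_cast; rfl
  set G : ℕ := g.natAbs with hG
  have hGdvd : (G : ℤ) ∣ g := Int.natAbs_dvd.mpr dvd_rfl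
  have hdvdG : ∀ q : ℕ, q ∣ G → (q:ℤ) ∣ g := by
    intro q hqG
    exact (Int.natCast_dvd_natCast.mpr hqG).trans hGdvd
  have hNG : N ∣ G := by
    apply Finset.prod_primes_dvd
    · intro p hp
      rw [hP, Finset.mem_filter] at hp
      exact hp.2.1.prime
    · intro p hp
      have := hPdvd p hp
      rw [← Int.natAbs_dvd_natAbs] at this
      simpa using this
  obtain ⟨m, hm⟩ := hNG
  have hGne : G ≠ 0 := fun h => hgne (by rw [hG] at h; exact Int.natAbs_eq_zero.mp h)
  have hm1 : m = 1 := by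
    by_contra hm1
    obtain ⟨q, hqp, hqm⟩ := Nat.exists_prime_and_dvd hm1
    have hqG : q ∣ G := hm ▸ Dvd.dvd.mul_left hqm N
    have hqmem : q ∈ P := hprime_mem q hqp (hdvdG q hqG)
    have hqN : q ∣ N := Finset.dvd_prod_of_mem _ hqmem
    have hq2G : q^2 ∣ G := by
      rw [hm, sq]
      exact mul_dvd_mul hqN hqm
    have : (q:ℤ)^2 ∣ g := by
      have : ((q^2 : ℕ) : ℤ) ∣ (G:ℤ) := Int.natCast_dvd_natCast.mpr hq2G
      push_cast at this
      exact this.trans hGdvd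
    exact hsq q hqmem this
  have hGN : G = N := by rw [hm, hm1, mul_one]
  have hgnonneg : 0 ≤ g :=
    (abs_nonneg g).trans_eq ((Int.abs_eq_normalize g).trans Finset.normalize_gcd)
  have hfin : g = (G : ℤ) := by
    rw [hG, Int.natAbs_of_nonneg hgnonneg]
  rw [hfin, hGN, hcastN]
end

section
/- Let A be a commutative ring with a filtration by ideals I = I^{⋆1} ⊇ I^{⋆2} ⊇ ... given by powers of an ideal I, with ∩_{n≥1} I^{⋆n} = {0}. Suppose δ ∈ I^{⋆2} and let [2] : A → A be a ring endomorphism (for the product ⋆) preserving the filtration such that for every n ≥ 2 and x ∈ I^{⋆n}, [2]x ≡ 2^n x (mod I^{⋆(n+1)}). If [2]δ - 2δ + δ⋆δ = 0, then δ ∈ I^{⋆n} for all n ≥ 1, hence δ = 0. -/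
theorem delta_in_all_powers_and_zero
    (A : Type*) [CommRing A] [Algebra ℚ A]
    (I : Ideal A)
    (hsep : ∀ x : A, (∀ n : ℕ, 1 ≤ n → x ∈ I ^ n) → x = 0)
    (φ : A →+* A)
    (hφpres : ∀ n : ℕ, ∀ x ∈ I ^ n, φ x ∈ I ^ n)
    (hφ : ∀ n : ℕ, 2 ≤ n → ∀ x ∈ I ^ n, φ x - (2 : A) ^ n * x ∈ I ^ (n + 1))
    (δ : A) (hδ : δ ∈ I ^ 2)
    (hrel : φ δ - 2 * δ + δ * δ = 0) :
    (∀ n : ℕ, 1 ≤ n → δ ∈ I ^ n) ∧ δ = 0 := by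
  have hδ1 : δ ∈ I := Ideal.pow_le_self two_ne_zero hδ
  have key : ∀ n, 2 ≤ n → δ ∈ I ^ n := by
    intro n hn
    induction n with
    | zero => omega
    | succ m ih =>
      rcases Nat.lt_or_ge m 2 with hm | hm
      · interval_cases m
        · omega
        · simpa using hδ
      have hδm := ih hm
      have h1 := hφ m hm δ hδm
      have h2 : δ * δ ∈ I ^ (m + 1) := by
        rw [pow_succ]
        exact Ideal.mul_mem_mul hδm hδ1
      have hφδ : φ δ = 2 * δ - δ * δ := by linear_combination hrel
      have h3 : ((2 : A) - 2 ^ m) * δ ∈ I ^ (m + 1) := by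
        have h4 := (I ^ (m + 1)).add_mem h1 h2
        rw [hφδ] at h4
        convert h4 using 1
        ring
      have hc : ((2 : ℚ) - 2 ^ m) ≠ 0 := by
        have h5 : (2 : ℚ) < 2 ^ m := by
          calc (2 : ℚ) < 4 := by norm_num
            _ = 2 ^ 2 := by norm_num
            _ ≤ 2 ^ m := pow_le_pow_right₀ (by norm_num) hm
        linarith
      have heq : δ = algebraMap ℚ A ((2 - 2 ^ m)⁻¹) * (((2 : A) - 2 ^ m) * δ) := by
        have halg : ((2 : A) - 2 ^ m) = algebraMap ℚ A (2 - 2 ^ m) := by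
          simp [map_sub, map_pow, map_ofNat]
        rw [halg, ← mul_assoc, ← map_mul, inv_mul_cancel₀ hc, map_one, one_mul]
      rw [heq]
      exact Ideal.mul_mem_left _ _ h3
  have hall : ∀ n : ℕ, 1 ≤ n → δ ∈ I ^ n := by
    intro n hn
    rcases Nat.lt_or_ge n 2 with h | h
    · interval_cases n
      simpa using hδ1
    · exact key n h
  exact ⟨hall, hsep δ hall⟩
end
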